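/- Let ν be a probability measure on (0,∞). Then ∫₀^∞ ν([t,∞))^{1/d} dt < ∞ implies ∫₀^∞ t^d ν(dt) < ∞. (The integrability condition on the 1/d-th power of the tail is stronger than finiteness of the d-th moment.) -/

import Mathlib

open MeasureTheory Set ENNReal

theorem stmt_10 (d : ℕ) (hd : 2 ≤ d) (ν : Measure ℝ) [IsProbabilityMeasure ν]
    (hsupp : ν (Set.Iic 0) = 0)
    (htail : ∫⁻ t in Set.Ioi (0:ℝ), (ν (Set.Ici t)) ^ ((1 : ℝ) / d) ≠ ⊤) :
    ∫⁻ t, ENNReal.ofReal (t ^ d) ∂ν ≠ ⊤ := by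
  have hd0 : (0:ℝ) < d := by positivity
  set T : ℝ → ℝ≥0∞ := fun t => ν (Set.Ici t) with hT
  set A : ℝ≥0∞ := ∫⁻ t in Set.Ioi (0:ℝ), T t ^ ((1 : ℝ) / d) with hA
  -- a.e. nonneg
  have hae : ∀ᵐ x ∂ν, 0 < x := by
    have : ν {x : ℝ | ¬ 0 < x} = 0 := by
      simpa [Set.Iic] using hsupp
    exact this
  -- T is antitone hence measurable
  have hTanti : Antitone T := fun s t hst => measure_mono (Set.Ici_subset_Ici.2 hst)
  have hTmeas : Measurable T := hTanti.measurable
  -- key pointwise bound: for t > 0, ofReal t * T t ^ (1/d) ≤ A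
  have key : ∀ t : ℝ, 0 < t → ENNReal.ofReal t * T t ^ ((1:ℝ)/d) ≤ A := by
    intro t ht
    have h1 : ENNReal.ofReal t * T t ^ ((1:ℝ)/d)
        = ∫⁻ _ in Set.Ioc (0:ℝ) t, T t ^ ((1:ℝ)/d) := by
      rw [setLIntegral_const, Real.volume_Ioc, mul_comm]
      simp
    rw [h1]
    calc ∫⁻ _ in Set.Ioc (0:ℝ) t, T t ^ ((1:ℝ)/d)
        ≤ ∫⁻ s in Set.Ioc (0:ℝ) t, T s ^ ((1:ℝ)/d) := by
          refine setLIntegral_mono (hTmeas.pow_const _) ?_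
          intro s hs
          exact ENNReal.rpow_le_rpow (hTanti hs.2) (by positivity)
      _ ≤ A := lintegral_mono_set Set.Ioc_subset_Ioi_self
  -- bound the integrand of the layer cake integral
  have hbound : ∀ t ∈ Set.Ioi (0:ℝ),
      T t * ENNReal.ofReal (t ^ ((d:ℝ) - 1)) ≤ T t ^ ((1:ℝ)/d) * A ^ (d - 1) := by
    intro t ht
    have ht' : (0:ℝ) < t := ht
    have hsplit : T t = T t ^ ((1:ℝ)/d) * (T t ^ ((1:ℝ)/d)) ^ (d - 1) := by
      rw [← ENNReal.rpow_natCast (T t ^ ((1:ℝ)/d)) (d-1), ← ENNReal.rpow_mul,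
        ← ENNReal.rpow_add_of_nonneg _ _ (by positivity) (by positivity)]
      have : (1:ℝ)/d + 1/d * ((d:ℕ) - 1 : ℕ) = 1 := by
        rw [Nat.cast_sub (by omega : 1 ≤ d), Nat.cast_one]
        field_simp
        ring
      rw [this, ENNReal.rpow_one]
    have hpow : ENNReal.ofReal (t ^ ((d:ℝ) - 1)) = (ENNReal.ofReal t) ^ (d - 1) := by
      rw [← ENNReal.ofReal_pow ht'.le]
      congr 1
      rw [← Real.rpow_natCast t (d-1)]
      congr 1
      push_cast [Nat.cast_sub (by omega : 1 ≤ d)]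
      ring
    conv_lhs => rw [hsplit, hpow]
    rw [mul_assoc, ← mul_pow]
    exact mul_le_mul_right (pow_le_pow_left' (by rw [mul_comm]; exact key t ht') _) _
  -- layer cake
  have hlc : ∫⁻ t, ENNReal.ofReal (t ^ d) ∂ν
      = ENNReal.ofReal d * ∫⁻ t in Set.Ioi (0:ℝ),
          T t * ENNReal.ofReal (t ^ ((d:ℝ) - 1)) := by
    have h1 : ∫⁻ t, ENNReal.ofReal (t ^ d) ∂ν
        = ∫⁻ t, ENNReal.ofReal (t ^ (d:ℝ)) ∂ν := by
      refine lintegral_congr_ae ?_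
      filter_upwards [hae] with x hx
      rw [Real.rpow_natCast]
    rw [h1, lintegral_rpow_eq_lintegral_meas_le_mul ν (hae.mono fun x hx => hx.le)
      aemeasurable_id hd0]
    rfl
  rw [hlc]
  refine ENNReal.mul_ne_top ENNReal.ofReal_ne_top ?_
  have : ∫⁻ t in Set.Ioi (0:ℝ), T t * ENNReal.ofReal (t ^ ((d:ℝ) - 1))
      ≤ ∫⁻ t in Set.Ioi (0:ℝ), T t ^ ((1:ℝ)/d) * A ^ (d - 1) := by
    refine setLIntegral_mono ((hTmeas.pow_const _).mul_const _) hbound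
  refine ne_top_of_le_ne_top ?_ this
  rw [lintegral_mul_const _ (hTmeas.pow_const _)]
  exact ENNReal.mul_ne_top htail (ENNReal.pow_ne_top htail)
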